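/- For every k ≥ 1 there exists a tournament on n = 7k vertices with at least 21^{n/7} (> 1.5448^n) minimal feedback vertex sets. -/
import Mathlib


/-- A set `W` of vertices is acyclic if the digraph `r` restricted to `W`
has no directed cycle (the transitive closure restricted to `W` is irreflexive). -/
def AcyclicOn {V : Type*} (r : V → V → Prop) (W : Set V) : Prop :=
  ∀ v : V, ¬ Relation.TransGen (fun a b => a ∈ W ∧ b ∈ W ∧ r a b) v v

/-- A tournament: an irreflexive relation with exactly one arc between
every pair of distinct vertices. -/
def IsTournament {V : Type*} (r : V → V → Prop) : Prop :=
  (∀ v : V, ¬ r v v) ∧ ∀ u v : V, u ≠ v → (r u v ↔ ¬ r v u)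

/-- A feedback vertex set: its deletion leaves an acyclic digraph. -/
def IsFVS {V : Type*} (r : V → V → Prop) (F : Set V) : Prop :=
  AcyclicOn r Fᶜ

/-- A minimal feedback vertex set. -/
def IsMinimalFVS {V : Type*} (r : V → V → Prop) (F : Set V) : Prop :=
  IsFVS r F ∧ ∀ F' : Set V, F' ⊆ F → IsFVS r F' → F' = F

/-- A feedback vertex set of the subtournament induced on `S`. -/
def IsFVSOn {V : Type*} (r : V → V → Prop) (S F : Set V) : Prop :=
  F ⊆ S ∧ AcyclicOn r (S \ F)

/-- A minimal feedback vertex set of the subtournament induced on `S`. -/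
def IsMinimalFVSOn {V : Type*} (r : V → V → Prop) (S F : Set V) : Prop :=
  IsFVSOn r S F ∧ ∀ F' : Set V, F' ⊆ F → IsFVSOn r S F' → F' = F

/-- Strong (strongly connected): a directed path between any ordered pair. -/
def IsStrong {V : Type*} (r : V → V → Prop) : Prop :=
  ∀ u v : V, Relation.ReflTransGen r u v

/-- The subtournament induced on `S` is strong. -/
def IsStrongOn {V : Type*} (r : V → V → Prop) (S : Set V) : Prop :=
  ∀ u ∈ S, ∀ v ∈ S, Relation.ReflTransGen (fun a b => a ∈ S ∧ b ∈ S ∧ r a b) u v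

/-- The score (out-degree) of a vertex. -/
noncomputable def outScore {V : Type*} (r : V → V → Prop) (v : V) : ℕ :=
  {u : V | r v u}.ncard

/-- The number of minimal feedback vertex sets of a tournament. -/
noncomputable def fvsCount (V : Type*) (r : V → V → Prop) : ℕ :=
  {F : Set V | IsMinimalFVS r F}.ncard

/-- `maxMinFVS n` = maximum number of minimal FVSs over all `n`-vertex tournaments. -/
noncomputable def maxMinFVS (n : ℕ) : ℕ :=
  sSup {k : ℕ | ∃ r : Fin n → Fin n → Prop, IsTournament r ∧ fvsCount (Fin n) r = k}


section Aux

def st7 (a b : Fin 7) : Prop :=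
  (b.val + 7 - a.val) % 7 = 1 ∨ (b.val + 7 - a.val) % 7 = 2 ∨ (b.val + 7 - a.val) % 7 = 4

instance st7.dec : ∀ a b, Decidable (st7 a b) := fun a b => by unfold st7; infer_instance

def triT : Fin 21 → Finset (Fin 7) :=
  ![{0,1,2}, {0,1,4}, {0,1,6}, {0,2,4}, {0,2,5}, {0,3,4}, {0,3,5}, {0,3,6}, {0,5,6}, {1,2,3}, {1,2,5}, {1,3,5}, {1,3,6}, {1,4,5}, {1,4,6}, {2,3,4}, {2,3,6}, {2,4,6}, {2,5,6}, {3,4,5}, {4,5,6}]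

def posT : Fin 21 → Fin 7 → ℕ :=
  ![![0,1,2,0,0,0,0], ![0,2,0,0,1,0,0], ![1,2,0,0,0,0,0], ![0,0,1,0,2,0,0],
   ![1,0,2,0,0,0,0], ![1,0,0,0,2,0,0], ![2,0,0,0,0,1,0], ![2,0,0,1,0,0,0],
   ![2,0,0,0,0,0,1], ![0,0,1,2,0,0,0], ![0,0,2,0,0,1,0], ![0,0,0,1,0,2,0],
   ![0,1,0,2,0,0,0], ![0,1,0,0,0,2,0], ![0,2,0,0,0,0,1], ![0,0,0,1,2,0,0],
   ![0,0,0,2,0,0,1], ![0,0,0,0,1,0,2], ![0,0,1,0,0,0,2], ![0,0,0,0,1,2,0],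
   ![0,0,0,0,0,1,2]]

lemma st7_irrefl : ∀ a : Fin 7, ¬ st7 a a := by decide
lemma st7_asymm : ∀ a b : Fin 7, a ≠ b → (st7 a b ↔ ¬ st7 b a) := by decide
lemma pos_lt : ∀ t (a b : Fin 7), a ∈ triT t → b ∈ triT t → st7 a b → posT t a < posT t b := by
  decide
lemma pos_le : ∀ t a, posT t a ≤ 2 := by decide
lemma cyc : ∀ t (d : Fin 7), d ∉ triT t → ∃ x y z : Fin 7,
    (x = d ∨ x ∈ triT t) ∧ (y = d ∨ y ∈ triT t) ∧ (z = d ∨ z ∈ triT t) ∧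
    st7 x y ∧ st7 y z ∧ st7 z x := by decide
lemma triT_inj : ∀ t t' : Fin 21, triT t = triT t' → t = t' := by decide

variable {k : ℕ}

/-- residue of a vertex -/
def rs {n : ℕ} (v : Fin n) : Fin 7 := ⟨v.val % 7, Nat.mod_lt _ (by norm_num)⟩

/-- block of a vertex -/
def bkF (v : Fin (7 * k)) : Fin k := ⟨v.val / 7, by have := v.isLt; omega⟩

/-- the composed tournament relation -/
def bigR (k : ℕ) : Fin (7 * k) → Fin (7 * k) → Prop :=
  fun u v => u.val / 7 < v.val / 7 ∨ (u.val / 7 = v.val / 7 ∧ st7 (rs u) (rs v))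

/-- vertex from block and residue -/
def vt (i : Fin k) (a : Fin 7) : Fin (7 * k) :=
  ⟨7 * i.val + a.val, by have := i.isLt; have := a.isLt; omega⟩

lemma rs_vt (i : Fin k) (a : Fin 7) : rs (vt i a) = a := by
  have := a.isLt
  apply Fin.ext
  show (7 * i.val + a.val) % 7 = a.val
  omega

lemma bk_vt (i : Fin k) (a : Fin 7) : (vt i a).val / 7 = i.val := by
  have := a.isLt
  show (7 * i.val + a.val) / 7 = i.val
  omega

lemma bkF_vt (i : Fin k) (a : Fin 7) : bkF (vt i a) = i := Fin.ext (bk_vt i a)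

lemma vt_self (v : Fin (7 * k)) : vt (bkF v) (rs v) = v := by
  apply Fin.ext
  show 7 * (v.val / 7) + v.val % 7 = v.val
  omega

lemma acyclicOn_of_rank {V : Type*} (r : V → V → Prop) (W : Set V) (g : V → ℕ)
    (h : ∀ a b, a ∈ W → b ∈ W → r a b → g a < g b) : AcyclicOn r W := by
  intro v hv
  have key : ∀ {x y : V}, Relation.TransGen (fun a b => a ∈ W ∧ b ∈ W ∧ r a b) x y →
      g x < g y := by
    intro x y hxy
    induction hxy with
    | single h' => exact h _ _ h'.1 h'.2.1 h'.2.2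
    | tail _ h' ih => exact ih.trans (h _ _ h'.1 h'.2.1 h'.2.2)
  exact absurd (key hv) (lt_irrefl _)

lemma bigR_tournament (k : ℕ) : IsTournament (bigR k) := by
  constructor
  · rintro v (h | ⟨_, h⟩)
    · omega
    · exact st7_irrefl _ h
  · intro u v huv
    rcases lt_trichotomy (u.val / 7) (v.val / 7) with h | h | h
    · exact iff_of_true (Or.inl h) (by rintro (h' | ⟨h', _⟩) <;> omega)
    · have hr : rs u ≠ rs v := by
        intro he
        apply huv
        apply Fin.ext
        have : u.val % 7 = v.val % 7 := congrArg Fin.val he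
        omega
      have e1 : bigR k u v ↔ st7 (rs u) (rs v) := by
        constructor
        · rintro (h' | ⟨_, h'⟩)
          · omega
          · exact h'
        · intro h'; exact Or.inr ⟨h, h'⟩
      have e2 : bigR k v u ↔ st7 (rs v) (rs u) := by
        constructor
        · rintro (h' | ⟨_, h'⟩)
          · omega
          · exact h'
        · intro h'; exact Or.inr ⟨h.symm, h'⟩
      rw [e1, e2]
      exact st7_asymm _ _ hr
    · exact iff_of_false (by rintro (h' | ⟨h', _⟩) <;> omega) (not_not_intro (Or.inl h))

/-- the candidate minimal FVS attached to a choice of triples -/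
def FV (k : ℕ) (c : Fin k → Fin 21) : Set (Fin (7 * k)) :=
  {v | rs v ∉ triT (c (bkF v))}

lemma FV_isFVS (c : Fin k → Fin 21) : IsFVS (bigR k) (FV k c) := by
  apply acyclicOn_of_rank (g := fun v => 3 * (v.val / 7) + posT (c (bkF v)) (rs v))
  intro a b ha hb hr
  have ha' : rs a ∈ triT (c (bkF a)) := not_not.mp ha
  have hb' : rs b ∈ triT (c (bkF b)) := not_not.mp hb
  rcases hr with h | ⟨h, h2⟩
  · have p1 := pos_le (c (bkF a)) (rs a)
    have p2 := pos_le (c (bkF b)) (rs b)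
    omega
  · have hbk : bkF a = bkF b := Fin.ext h
    rw [hbk] at ha' ⊢
    have := pos_lt (c (bkF b)) (rs a) (rs b) ha' hb' h2
    omega

lemma FV_minimal (c : Fin k → Fin 21) : IsMinimalFVS (bigR k) (FV k c) := by
  refine ⟨FV_isFVS c, ?_⟩
  intro F' hsub hF'
  apply Set.Subset.antisymm hsub
  intro v hv
  by_contra hv'
  obtain ⟨x, y, z, hx, hy, hz, e1, e2, e3⟩ := cyc (c (bkF v)) (rs v) hv
  set i := bkF v with hi
  have hmem : ∀ w : Fin 7, (w = rs v ∨ w ∈ triT (c i)) → vt i w ∈ F'ᶜ := by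
    intro w hw
    rcases hw with rfl | hw
    · rw [vt_self]; exact hv'
    · have : vt i w ∉ FV k c := by
        simp only [FV, Set.mem_setOf_eq, not_not, rs_vt, bkF_vt]
        exact hw
      exact fun hc => this (hsub hc)
  have harc : ∀ w w' : Fin 7, st7 w w' → bigR k (vt i w) (vt i w') := by
    intro w w' hw
    exact Or.inr ⟨by rw [bk_vt, bk_vt], by rw [rs_vt, rs_vt]; exact hw⟩
  have mx := hmem x hx
  have my := hmem y hy
  have mz := hmem z hz
  exact hF' (vt i x)
    (((Relation.TransGen.single ⟨mx, my, harc x y e1⟩).tail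
      ⟨my, mz, harc y z e2⟩).tail ⟨mz, mx, harc z x e3⟩)

lemma FV_inj (k : ℕ) : Function.Injective (FV k) := by
  intro c c' h
  funext i
  apply triT_inj
  apply Finset.ext
  intro a
  have := Set.ext_iff.mp h (vt i a)
  simp only [FV, Set.mem_setOf_eq, rs_vt, bkF_vt] at this
  exact not_iff_not.mp this

end Aux

theorem stmt10 (k : ℕ) (hk : 1 ≤ k) :
    ∃ r : Fin (7 * k) → Fin (7 * k) → Prop, IsTournament r ∧
      21 ^ k ≤ {F : Set (Fin (7 * k)) | IsMinimalFVS r F}.ncard := by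
  refine ⟨bigR k, bigR_tournament k, ?_⟩
  have hsubset : Set.range (FV k) ⊆ {F : Set (Fin (7 * k)) | IsMinimalFVS (bigR k) F} := by
    rintro _ ⟨c, rfl⟩
    exact FV_minimal c
  have h1 : (Set.range (FV k)).ncard = 21 ^ k := by
    rw [← Set.image_univ, Set.ncard_image_of_injective _ (FV_inj k), Set.ncard_univ]
    simp [Nat.card_eq_fintype_card]
  rw [← h1]
  exact Set.ncard_le_ncard hsubset (Set.toFinite _)
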